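/- arXiv:1207.2384 — 4 statements merged into one kernel-verified Lean document; each statement's English description precedes it below -/
import Mathlib

section
/- Let q ≥ 4 be a real number. For every measurable function G : ℝ² → [0,∞], one has ∫_{t∈ℝ} ∫_{r∈(0,∞)} Ω(t,r)^q · G(T(t,r), R(t,r)) · r² dr dt ≤ 2^{q−4} ∫∫_{{(T,R) : 0 < R < π, cos T + cos R > 0}} G(T,R) · sin²R dR dT. -/
open MeasureTheory Real ContinuousLinearMap
open scoped ENNReal

noncomputable section PenroseAux

/-- The Penrose map `(t,r) ↦ (T,R)`. -/
def penMap : ℝ × ℝ → ℝ × ℝ := fun p =>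
  (arctan (p.1 + p.2) + arctan (p.1 - p.2), arctan (p.1 + p.2) - arctan (p.1 - p.2))

/-- Its derivative. -/
def penDeriv (p : ℝ × ℝ) : ℝ × ℝ →L[ℝ] ℝ × ℝ :=
  ((1 / (1 + (p.1 + p.2) ^ 2) + 1 / (1 + (p.1 - p.2) ^ 2)) • fst ℝ ℝ ℝ +
      (1 / (1 + (p.1 + p.2) ^ 2) - 1 / (1 + (p.1 - p.2) ^ 2)) • snd ℝ ℝ ℝ).prod
    ((1 / (1 + (p.1 + p.2) ^ 2) - 1 / (1 + (p.1 - p.2) ^ 2)) • fst ℝ ℝ ℝ +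
      (1 / (1 + (p.1 + p.2) ^ 2) + 1 / (1 + (p.1 - p.2) ^ 2)) • snd ℝ ℝ ℝ)

lemma penMap_hasFDerivAt (p : ℝ × ℝ) : HasFDerivAt penMap (penDeriv p) p := by
  set a := 1 / (1 + (p.1 + p.2) ^ 2) with ha
  set b := 1 / (1 + (p.1 - p.2) ^ 2) with hb
  have h1 : HasFDerivAt (fun p : ℝ × ℝ => p.1 + p.2) (fst ℝ ℝ ℝ + snd ℝ ℝ ℝ) p :=
    (hasFDerivAt_fst.add hasFDerivAt_snd)
  have h2 : HasFDerivAt (fun p : ℝ × ℝ => p.1 - p.2) (fst ℝ ℝ ℝ - snd ℝ ℝ ℝ) p :=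
    (hasFDerivAt_fst.sub hasFDerivAt_snd)
  have hA : HasFDerivAt (fun p : ℝ × ℝ => arctan (p.1 + p.2))
      (a • (fst ℝ ℝ ℝ + snd ℝ ℝ ℝ)) p := by
    have := (Real.hasDerivAt_arctan (p.1 + p.2)).comp_hasFDerivAt p h1
    simpa [ha, Function.comp_def] using this
  have hB : HasFDerivAt (fun p : ℝ × ℝ => arctan (p.1 - p.2))
      (b • (fst ℝ ℝ ℝ - snd ℝ ℝ ℝ)) p := by
    have := (Real.hasDerivAt_arctan (p.1 - p.2)).comp_hasFDerivAt p h2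
    simpa [hb, Function.comp_def] using this
  have : HasFDerivAt penMap _ p := HasFDerivAt.prodMk (hA.add hB) (hA.sub hB)
  refine this.congr_fderiv ?_
  refine ContinuousLinearMap.ext fun v => ?_
  simp [penDeriv, ← ha, ← hb, Prod.ext_iff, smul_eq_mul]
  constructor <;> ring

lemma penDeriv_det (p : ℝ × ℝ) :
    (penDeriv p).det = 4 / ((1 + (p.1 + p.2) ^ 2) * (1 + (p.1 - p.2) ^ 2)) := by
  have hP : (0:ℝ) < (1 + (p.1 + p.2) ^ 2) * (1 + (p.1 - p.2) ^ 2) := by positivity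
  set a := 1 / (1 + (p.1 + p.2) ^ 2) with ha
  set b := 1 / (1 + (p.1 - p.2) ^ 2) with hb
  have : penDeriv p = LinearMap.toContinuousLinearMap
      (Matrix.toLin (Module.Basis.finTwoProd ℝ) (Module.Basis.finTwoProd ℝ) !![a + b, a - b; a - b, a + b]) :=
    (Matrix.toLin_finTwoProd_toContinuousLinearMap _ _ _ _).symm
  rw [this]
  have : (LinearMap.toContinuousLinearMap
      (Matrix.toLin (Module.Basis.finTwoProd ℝ) (Module.Basis.finTwoProd ℝ)
        !![a + b, a - b; a - b, a + b])).det =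
      LinearMap.det (Matrix.toLin (Module.Basis.finTwoProd ℝ) (Module.Basis.finTwoProd ℝ)
        !![a + b, a - b; a - b, a + b]) := rfl
  rw [this, LinearMap.det_toLin, Matrix.det_fin_two_of]
  have h1 : (1 + (p.1 + p.2) ^ 2) ≠ 0 := by positivity
  have h2 : (1 + (p.1 - p.2) ^ 2) ≠ 0 := by positivity
  rw [ha, hb]
  field_simp
  ring

lemma penMap_injective : Function.Injective penMap := by
  rintro ⟨t, r⟩ ⟨t', r'⟩ h
  simp only [penMap, Prod.mk.injEq] at h
  obtain ⟨h1, h2⟩ := h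
  have e1 : arctan (t + r) = arctan (t' + r') := by linarith
  have e2 : arctan (t - r) = arctan (t' - r') := by linarith
  have f1 := arctan_injective e1
  have f2 := arctan_injective e2
  refine Prod.ext ?_ ?_ <;> dsimp <;> linarith

lemma sin_arctan_sub (x y : ℝ) :
    sin (arctan x - arctan y) = (x - y) / Real.sqrt ((1 + x ^ 2) * (1 + y ^ 2)) := by
  have hx : (0:ℝ) < Real.sqrt (1 + x ^ 2) := by positivity
  have hy : (0:ℝ) < Real.sqrt (1 + y ^ 2) := by positivity
  rw [Real.sin_sub, Real.sin_arctan, Real.cos_arctan, Real.sin_arctan, Real.cos_arctan,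
    Real.sqrt_mul (by positivity)]
  field_simp

lemma penMap_mem (p : ℝ × ℝ) (hp : 0 < p.2) :
    penMap p ∈ {p : ℝ × ℝ | 0 < p.2 ∧ p.2 < Real.pi ∧ 0 < Real.cos p.1 + Real.cos p.2} := by
  obtain ⟨t, r⟩ := p
  have hlt : arctan (t - r) < arctan (t + r) := arctan_strictMono (by dsimp at hp; linarith)
  refine ⟨by simpa [penMap] using hlt, ?_, ?_⟩
  · have h1 := arctan_lt_pi_div_two (t + r)
    have h2 := neg_pi_div_two_lt_arctan (t - r)
    simp only [penMap]
    linarith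
  · simp only [penMap]
    rw [Real.cos_add_cos]
    have e1 : (arctan (t + r) + arctan (t - r) + (arctan (t + r) - arctan (t - r))) / 2
        = arctan (t + r) := by ring
    have e2 : (arctan (t + r) + arctan (t - r) - (arctan (t + r) - arctan (t - r))) / 2
        = arctan (t - r) := by ring
    rw [e1, e2]
    exact mul_pos (mul_pos two_pos (cos_arctan_pos _)) (cos_arctan_pos _)

end PenroseAux

/-- For `q ≥ 4` and every measurable `G : ℝ² → [0,∞]`,
`∫_{t∈ℝ} ∫_{r∈(0,∞)} Ω(t,r)^q G(T(t,r), R(t,r)) r² dr dt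
  ≤ 2^{q−4} ∫∫_{{(T,R) : 0 < R < π, cos T + cos R > 0}} G(T,R) sin²R dR dT`. -/
theorem penrose_Lq_change_of_variables (q : ℝ) (hq : 4 ≤ q)
    (G : ℝ × ℝ → ℝ≥0∞) (hG : Measurable G) :
    ∫⁻ t : ℝ, ∫⁻ r in Set.Ioi (0 : ℝ),
        ENNReal.ofReal ((2 / Real.sqrt ((1 + (t + r) ^ 2) * (1 + (t - r) ^ 2))) ^ q * r ^ 2) *
          G (Real.arctan (t + r) + Real.arctan (t - r),
             Real.arctan (t + r) - Real.arctan (t - r))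
      ≤ ENNReal.ofReal ((2 : ℝ) ^ (q - 4)) *
          ∫⁻ p in {p : ℝ × ℝ | 0 < p.2 ∧ p.2 < Real.pi ∧ 0 < Real.cos p.1 + Real.cos p.2},
            G p * ENNReal.ofReal (Real.sin p.2 ^ 2) := by
  set c : ℝ≥0∞ := ENNReal.ofReal ((2 : ℝ) ^ (q - 4)) with hc
  set g : ℝ × ℝ → ℝ≥0∞ := fun p => G p * ENNReal.ofReal (Real.sin p.2 ^ 2) with hgdef
  set H : ℝ × ℝ → ℝ≥0∞ := fun p => ENNReal.ofReal |(penDeriv p).det| * g (penMap p) with hHdef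
  set s : Set (ℝ × ℝ) := Set.univ ×ˢ Set.Ioi (0 : ℝ) with hsdef
  have hs : MeasurableSet s := MeasurableSet.univ.prod measurableSet_Ioi
  have hpen : Continuous penMap := by
    have h1 : Continuous fun p : ℝ × ℝ => Real.arctan (p.1 + p.2) :=
      Real.continuous_arctan.comp (continuous_fst.add continuous_snd)
    have h2 : Continuous fun p : ℝ × ℝ => Real.arctan (p.1 - p.2) :=
      Real.continuous_arctan.comp (continuous_fst.sub continuous_snd)
    exact (h1.add h2).prodMk (h1.sub h2)
  have hgmeas : Measurable g :=
    hG.mul ((Real.measurable_sin.comp measurable_snd).pow_const 2).ennreal_ofReal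
  have hdetfun : (fun p : ℝ × ℝ => |(penDeriv p).det|) =
      fun p => |4 / ((1 + (p.1 + p.2) ^ 2) * (1 + (p.1 - p.2) ^ 2))| :=
    funext fun p => by rw [penDeriv_det]
  have hH : Measurable H := by
    have hdm : Measurable fun p : ℝ × ℝ => |(penDeriv p).det| := by
      rw [hdetfun]; fun_prop
    exact hdm.ennreal_ofReal.mul (hgmeas.comp hpen.measurable)
  -- the key real pointwise inequality
  have key_real : ∀ t r : ℝ, 0 < r →
      (2 / Real.sqrt ((1 + (t + r) ^ 2) * (1 + (t - r) ^ 2))) ^ q * r ^ 2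
        ≤ (2 : ℝ) ^ (q - 4) * |(penDeriv (t, r)).det| * Real.sin ((penMap (t, r)).2) ^ 2 := by
    intro t r hr
    set P := (1 + (t + r) ^ 2) * (1 + (t - r) ^ 2) with hPdef
    have hP1 : (1 : ℝ) ≤ P := by nlinarith [sq_nonneg (t + r), sq_nonneg (t - r), sq_nonneg ((t + r) * (t - r))]
    have hP0 : (0 : ℝ) < P := lt_of_lt_of_le one_pos hP1
    have hsq1 : (1 : ℝ) ≤ Real.sqrt P := by
      rw [show (1 : ℝ) = Real.sqrt 1 from Real.sqrt_one.symm]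
      exact Real.sqrt_le_sqrt hP1
    have hs0 : (0 : ℝ) < Real.sqrt P := lt_of_lt_of_le one_pos hsq1
    set W := 2 / Real.sqrt P with hW
    have hW0 : 0 < W := by positivity
    have hW2 : W ≤ 2 := by
      rw [hW]
      calc 2 / Real.sqrt P ≤ 2 / 1 := by
            exact div_le_div_of_nonneg_left (by norm_num) one_pos hsq1
        _ = 2 := by norm_num
    have hsin : Real.sin ((penMap (t, r)).2) = 2 * r / Real.sqrt P := by
      show Real.sin (Real.arctan (t + r) - Real.arctan (t - r)) = _
      rw [sin_arctan_sub]
      congr 1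
      ring
    have hdet : |(penDeriv (t, r)).det| = 4 / P := by
      rw [penDeriv_det]
      exact abs_of_pos (by positivity)
    have hW4 : W ^ (4 : ℕ) = 16 / P ^ 2 := by
      rw [hW, div_pow]
      norm_num
      rw [show (Real.sqrt P) ^ 4 = ((Real.sqrt P) ^ 2) ^ 2 by ring, Real.sq_sqrt hP0.le]
    have hWq : W ^ q ≤ (2 : ℝ) ^ (q - 4) * W ^ (4 : ℕ) := by
      have h1 : W ^ q = W ^ (q - 4) * W ^ ((4 : ℕ) : ℝ) := by
        rw [← Real.rpow_add hW0]
        norm_num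
      rw [h1, Real.rpow_natCast]
      exact mul_le_mul_of_nonneg_right
        (Real.rpow_le_rpow hW0.le hW2 (by linarith)) (by positivity)
    calc W ^ q * r ^ 2 ≤ ((2 : ℝ) ^ (q - 4) * W ^ (4 : ℕ)) * r ^ 2 :=
          mul_le_mul_of_nonneg_right hWq (sq_nonneg r)
      _ = (2 : ℝ) ^ (q - 4) * |(penDeriv (t, r)).det| * Real.sin ((penMap (t, r)).2) ^ 2 := by
          rw [hW4, hsin, hdet, div_pow, mul_pow, Real.sq_sqrt hP0.le]
          field_simp
          ring
  -- change of variables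
  have key : ∫⁻ p in penMap '' s, g p = ∫⁻ p in s, H p :=
    lintegral_image_eq_lintegral_abs_det_fderiv_mul volume hs
      (fun x _ => (penMap_hasFDerivAt x).hasFDerivWithinAt) penMap_injective.injOn g
  have himg : penMap '' s ⊆
      {p : ℝ × ℝ | 0 < p.2 ∧ p.2 < Real.pi ∧ 0 < Real.cos p.1 + Real.cos p.2} := by
    rintro _ ⟨p, hp, rfl⟩
    exact penMap_mem p hp.2
  have hTonelli : ∫⁻ p in s, H p = ∫⁻ t : ℝ, ∫⁻ r in Set.Ioi (0 : ℝ), H (t, r) := by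
    have hr : (volume : Measure (ℝ × ℝ)).restrict s =
        ((volume : Measure ℝ).restrict Set.univ).prod
          ((volume : Measure ℝ).restrict (Set.Ioi 0)) := by
      rw [Measure.prod_restrict, ← Measure.volume_eq_prod]
    rw [hr, lintegral_prod _ hH.aemeasurable]
    simp
  calc ∫⁻ t : ℝ, ∫⁻ r in Set.Ioi (0 : ℝ),
        ENNReal.ofReal ((2 / Real.sqrt ((1 + (t + r) ^ 2) * (1 + (t - r) ^ 2))) ^ q * r ^ 2) *
          G (Real.arctan (t + r) + Real.arctan (t - r),
             Real.arctan (t + r) - Real.arctan (t - r))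
      ≤ ∫⁻ t : ℝ, ∫⁻ r in Set.Ioi (0 : ℝ), c * H (t, r) := by
        refine lintegral_mono fun t => ?_
        refine setLIntegral_mono (measurable_const.mul
          (hH.comp (measurable_const.prodMk measurable_id))) fun r hr => ?_
        have hGr : G (Real.arctan (t + r) + Real.arctan (t - r),
            Real.arctan (t + r) - Real.arctan (t - r)) = G (penMap (t, r)) := rfl
        rw [hGr]
        calc ENNReal.ofReal
              ((2 / Real.sqrt ((1 + (t + r) ^ 2) * (1 + (t - r) ^ 2))) ^ q * r ^ 2) *
                G (penMap (t, r))
            ≤ ENNReal.ofReal ((2 : ℝ) ^ (q - 4) * |(penDeriv (t, r)).det| *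
                Real.sin ((penMap (t, r)).2) ^ 2) * G (penMap (t, r)) :=
              mul_le_mul_left (ENNReal.ofReal_le_ofReal (key_real t r hr)) _
          _ = c * H (t, r) := by
              rw [ENNReal.ofReal_mul (by positivity :
                    (0:ℝ) ≤ (2 : ℝ) ^ (q - 4) * |(penDeriv (t, r)).det|),
                ENNReal.ofReal_mul (by positivity : (0:ℝ) ≤ (2 : ℝ) ^ (q - 4))]
              rw [hc, hHdef, hgdef]
              ring
    _ = ∫⁻ t : ℝ, c * ∫⁻ r in Set.Ioi (0 : ℝ), H (t, r) := by
        simp_rw [lintegral_const_mul' c _ ENNReal.ofReal_ne_top]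
    _ = c * ∫⁻ t : ℝ, ∫⁻ r in Set.Ioi (0 : ℝ), H (t, r) :=
        lintegral_const_mul' c _ ENNReal.ofReal_ne_top
    _ = c * ∫⁻ p in s, H p := by rw [hTonelli]
    _ = c * ∫⁻ p in penMap '' s, g p := by rw [key]
    _ ≤ c * ∫⁻ p in {p : ℝ × ℝ | 0 < p.2 ∧ p.2 < Real.pi ∧
          0 < Real.cos p.1 + Real.cos p.2}, g p :=
        mul_le_mul_right (lintegral_mono_set himg) c
end

section
/- Let w : (0,∞) → ℝ be twice continuously differentiable, and define v : (0,π) → ℝ by v(R) = w(tan(R/2)) / (1 + cos R), so that v(2·arctan r) = ((1+r²)/2)·w(r). Then for every r > 0, writing R = 2·arctan r, one has (2/(1+r²)) · (1/sin²R) · d/dR ( sin²R · v′(R) ) = ((1+r²)/2)² · ( w″(r) + (2/r)·w′(r) ) + ((1+r²)/2) · r · w′(r) + ((3+r²)/2) · w(r). -/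
open Real Filter Set

private lemma tanHalf_hasDerivAt {S : ℝ} (hS : S ∈ Set.Ioo (-π) π) :
    HasDerivAt (fun S : ℝ => Real.tan (S / 2)) ((1 + Real.tan (S / 2) ^ 2) / 2) S := by
  have hc : 0 < Real.cos (S / 2) :=
    Real.cos_pos_of_mem_Ioo ⟨by linarith [hS.1], by linarith [hS.2]⟩
  have h1 : HasDerivAt (fun S : ℝ => S / 2) (1 / 2) S := (hasDerivAt_id S).div_const 2
  have h2 := (Real.hasDerivAt_tan hc.ne').comp S h1
  refine h2.congr_deriv ?_
  rw [← Real.inv_one_add_tan_sq hc.ne']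
  field_simp

private lemma V1_hasDerivAt (w w' : ℝ → ℝ)
    (hw : ∀ r : ℝ, 0 < r → HasDerivAt w (w' r) r)
    {S : ℝ} (hS : S ∈ Set.Ioo 0 π) :
    HasDerivAt (fun S : ℝ => w (Real.tan (S / 2)) * ((1 + Real.tan (S / 2) ^ 2) / 2))
      (w' (Real.tan (S / 2)) * ((1 + Real.tan (S / 2) ^ 2) / 2) * ((1 + Real.tan (S / 2) ^ 2) / 2)
        + w (Real.tan (S / 2)) * (Real.tan (S / 2) * ((1 + Real.tan (S / 2) ^ 2) / 2))) S := by
  have hpi := Real.pi_pos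
  have ht := tanHalf_hasDerivAt ⟨by linarith [hS.1], hS.2⟩
  have htpos : 0 < Real.tan (S / 2) :=
    Real.tan_pos_of_pos_of_lt_pi_div_two (by linarith [hS.1]) (by linarith [hS.2])
  have hA := (hw _ htpos).comp S ht
  have hB : HasDerivAt (fun S : ℝ => (1 + Real.tan (S / 2) ^ 2) / 2)
      (Real.tan (S / 2) * ((1 + Real.tan (S / 2) ^ 2) / 2)) S := by
    have h := ((ht.pow 2).const_add 1).div_const 2
    refine h.congr_deriv ?_
    push_cast
    try ring
  have := hA.mul hB
  refine this.congr_deriv ?_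
  try ring
  rfl

/-- The operator `H₀` of the Penrose transform on radial functions:
let `w` be twice differentiable on `(0,∞)` with derivatives `w'`, `w''`, and define
`v(R) = w(tan(R/2))/(1 + cos R)` (so that `v(2 arctan r) = ((1+r²)/2) w(r)`).
Then for `r > 0`, writing `R = 2 arctan r`,
`(2/(1+r²)) (1/sin²R) d/dR (sin²R v′(R))
  = ((1+r²)/2)² (w″(r) + (2/r) w′(r)) + ((1+r²)/2) r w′(r) + ((3+r²)/2) w(r)`. -/
theorem penrose_H0_radial (w w' w'' : ℝ → ℝ)
    (hw : ∀ r : ℝ, 0 < r → HasDerivAt w (w' r) r)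
    (hw' : ∀ r : ℝ, 0 < r → HasDerivAt w' (w'' r) r)
    (v : ℝ → ℝ)
    (hv : ∀ R : ℝ, v R = w (Real.tan (R / 2)) / (1 + Real.cos R))
    (r : ℝ) (hr : 0 < r) :
    (2 / (1 + r ^ 2)) *
        ((1 / Real.sin (2 * Real.arctan r) ^ 2) *
          deriv (fun S : ℝ => Real.sin S ^ 2 * deriv v S) (2 * Real.arctan r))
      = ((1 + r ^ 2) / 2) ^ 2 * (w'' r + (2 / r) * w' r)
          + ((1 + r ^ 2) / 2) * r * w' r + ((3 + r ^ 2) / 2) * w r := by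
  have hpi := Real.pi_pos
  have hr2 : (0:ℝ) < 1 + r ^ 2 := by positivity
  set R₀ := 2 * Real.arctan r with hR₀def
  have harc : 0 < Real.arctan r := by rw [← Real.arctan_zero]; exact Real.arctan_strictMono hr
  have harc2 : Real.arctan r < π / 2 := Real.arctan_lt_pi_div_two r
  have hR₀mem : R₀ ∈ Set.Ioo 0 π := ⟨by simp [hR₀def]; linarith, by simp [hR₀def]; linarith⟩
  have hR₀mem' : R₀ ∈ Set.Ioo (-π) π := ⟨by linarith [hR₀mem.1], hR₀mem.2⟩
  have htan : Real.tan (R₀ / 2) = r := by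
    rw [hR₀def, show 2 * Real.arctan r / 2 = Real.arctan r by ring, Real.tan_arctan]
  have hsqrt : Real.sqrt (1 + r ^ 2) ^ 2 = 1 + r ^ 2 := Real.sq_sqrt hr2.le
  have hsqrtpos : 0 < Real.sqrt (1 + r ^ 2) := Real.sqrt_pos.mpr hr2
  have hsin : Real.sin R₀ = 2 * r / (1 + r ^ 2) := by
    rw [hR₀def, Real.sin_two_mul, Real.sin_arctan, Real.cos_arctan]
    rw [show (2:ℝ) * (r / Real.sqrt (1 + r ^ 2)) * (1 / Real.sqrt (1 + r ^ 2))
      = 2 * r / Real.sqrt (1 + r ^ 2) ^ 2 by ring, hsqrt]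
  have hcos : Real.cos R₀ = (1 - r ^ 2) / (1 + r ^ 2) := by
    rw [hR₀def, Real.cos_two_mul, Real.cos_arctan, div_pow, one_pow, hsqrt]
    field_simp
    ring
  -- eventual equality of v with V1
  have hnb : ∀ᶠ S in nhds R₀, S ∈ Set.Ioo (-π) π := isOpen_Ioo.eventually_mem hR₀mem'
  have hveq : v =ᶠ[nhds R₀] fun S => w (Real.tan (S / 2)) * ((1 + Real.tan (S / 2) ^ 2) / 2) := by
    filter_upwards [hnb] with S hS
    have hc : 0 < Real.cos (S / 2) :=
      Real.cos_pos_of_mem_Ioo ⟨by linarith [hS.1], by linarith [hS.2]⟩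
    have h1 : 1 + Real.cos S = 2 * Real.cos (S / 2) ^ 2 := by
      have := Real.cos_sq (S / 2)
      rw [show 2 * (S / 2) = S by ring] at this
      linarith
    have h3 : 1 + Real.tan (S / 2) ^ 2 = 1 / Real.cos (S / 2) ^ 2 := by
      rw [← Real.inv_one_add_tan_sq hc.ne', one_div, inv_inv]
    rw [hv S, h1, h3]
    field_simp
  -- deriv v eventually equals D
  have hDeq : deriv v =ᶠ[nhds R₀] fun S =>
      w' (Real.tan (S / 2)) * ((1 + Real.tan (S / 2) ^ 2) / 2) * ((1 + Real.tan (S / 2) ^ 2) / 2)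
        + w (Real.tan (S / 2)) * (Real.tan (S / 2) * ((1 + Real.tan (S / 2) ^ 2) / 2)) := by
    refine hveq.deriv.trans ?_
    filter_upwards [isOpen_Ioo.eventually_mem hR₀mem] with S hS
    exact (V1_hasDerivAt w w' hw hS).deriv
  have hgeq : (fun S : ℝ => Real.sin S ^ 2 * deriv v S) =ᶠ[nhds R₀]
      (fun S : ℝ => Real.sin S ^ 2 *
        (w' (Real.tan (S / 2)) * ((1 + Real.tan (S / 2) ^ 2) / 2) * ((1 + Real.tan (S / 2) ^ 2) / 2)
          + w (Real.tan (S / 2)) * (Real.tan (S / 2) * ((1 + Real.tan (S / 2) ^ 2) / 2)))) := by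
    filter_upwards [hDeq] with S hS
    rw [hS]
  rw [hgeq.deriv_eq]
  -- now compute the derivative of the explicit function at R₀
  have ht0 := tanHalf_hasDerivAt hR₀mem'
  rw [htan] at ht0
  -- ht0 : HasDerivAt (fun S => tan (S/2)) ((1 + r^2)/2) R₀
  have hwr : HasDerivAt w (w' r) (Real.tan (R₀ / 2)) := by rw [htan]; exact hw r hr
  have hwr' : HasDerivAt w' (w'' r) (Real.tan (R₀ / 2)) := by rw [htan]; exact hw' r hr
  have hA : HasDerivAt (fun S : ℝ => w (Real.tan (S / 2))) (w' r * ((1 + r ^ 2) / 2)) R₀ :=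
    hwr.comp R₀ ht0
  have hA' : HasDerivAt (fun S : ℝ => w' (Real.tan (S / 2))) (w'' r * ((1 + r ^ 2) / 2)) R₀ :=
    hwr'.comp R₀ ht0
  have hB : HasDerivAt (fun S : ℝ => (1 + Real.tan (S / 2) ^ 2) / 2)
      (r * ((1 + r ^ 2) / 2)) R₀ := by
    have h := ((ht0.pow 2).const_add 1).div_const 2
    rw [htan] at h
    refine h.congr_deriv ?_
    push_cast
    ring
  have hsin2 : HasDerivAt (fun S : ℝ => Real.sin S ^ 2) (2 * Real.sin R₀ * Real.cos R₀) R₀ := by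
    have h := (Real.hasDerivAt_sin R₀).pow 2
    refine h.congr_deriv ?_
    push_cast
    ring
  have hD := ((hA'.mul hB).mul hB).add (hA.mul (ht0.mul hB))
  have hG := hsin2.mul hD
  have hG' : HasDerivAt (fun S : ℝ => Real.sin S ^ 2 *
        (w' (Real.tan (S / 2)) * ((1 + Real.tan (S / 2) ^ 2) / 2) * ((1 + Real.tan (S / 2) ^ 2) / 2)
          + w (Real.tan (S / 2)) * (Real.tan (S / 2) * ((1 + Real.tan (S / 2) ^ 2) / 2)))) _ R₀ := hG
  rw [hG'.deriv]
  simp only [Pi.mul_apply, Pi.add_apply, htan, hsin, hcos]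
  have hrne : r ≠ 0 := hr.ne'
  field_simp
  ring
end

section
/- For every real number s > 3, there exists a constant C > 0 such that for every t ∈ ℝ, ∫₀^∞ Ω(t,r)^s · r² dr ≤ C, where Ω(t,r) = 2/√((1+(t+r)²)(1+(t−r)²)). -/
open MeasureTheory
open scoped ENNReal

private lemma omega_pointwise_bound (s : ℝ) (hs : 0 ≤ s) (t r : ℝ) :
    (2 / Real.sqrt ((1 + (t + r) ^ 2) * (1 + (t - r) ^ 2))) ^ s * r ^ 2
      ≤ 2 ^ s * (1 + r ^ 2) ^ (-(s / 2)) * r ^ 2 := by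
  have h0 : (0:ℝ) < 1 + r ^ 2 := by positivity
  have h1 : (1 + r ^ 2 : ℝ) ≤ (1 + (t + r) ^ 2) * (1 + (t - r) ^ 2) := by
    nlinarith [sq_nonneg t, sq_nonneg ((t + r) * (t - r)), sq_nonneg (t + r), sq_nonneg (t - r)]
  have hsqpos : 0 < Real.sqrt (1 + r ^ 2) := Real.sqrt_pos.mpr h0
  have hdiv : 2 / Real.sqrt ((1 + (t + r) ^ 2) * (1 + (t - r) ^ 2))
      ≤ 2 / Real.sqrt (1 + r ^ 2) := by
    gcongr
  have hpow : (2 / Real.sqrt ((1 + (t + r) ^ 2) * (1 + (t - r) ^ 2))) ^ s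
      ≤ (2 / Real.sqrt (1 + r ^ 2)) ^ s :=
    Real.rpow_le_rpow (by positivity) hdiv hs
  have heq : (2 / Real.sqrt (1 + r ^ 2)) ^ s = 2 ^ s * (1 + r ^ 2) ^ (-(s / 2)) := by
    rw [Real.div_rpow (by norm_num) (Real.sqrt_nonneg _), Real.sqrt_eq_rpow,
      ← Real.rpow_mul h0.le, div_eq_mul_inv, ← Real.rpow_neg h0.le]
    congr 1
    ring
  rw [heq] at hpow
  exact mul_le_mul_of_nonneg_right hpow (sq_nonneg r)

private lemma omega_dom_integrable (s : ℝ) (hs : 3 < s) :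
    IntegrableOn (fun r : ℝ => 2 ^ s * (1 + r ^ 2) ^ (-(s / 2)) * r ^ 2) (Set.Ioi 0) := by
  have hcont : Continuous fun r : ℝ => 2 ^ s * (1 + r ^ 2) ^ (-(s / 2)) * r ^ 2 := by
    refine Continuous.mul (continuous_const.mul ?_) (continuous_pow 2)
    exact Continuous.rpow_const (by continuity) (fun x => Or.inl (by positivity))
  rw [← Set.Ioc_union_Ioi_eq_Ioi (by norm_num : (0:ℝ) ≤ 1)]
  apply IntegrableOn.union
  · exact hcont.integrableOn_Ioc
  · have hbase : IntegrableOn (fun r : ℝ => r ^ (2 - s)) (Set.Ioi 1) :=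
      integrableOn_Ioi_rpow_of_lt (by linarith) one_pos
    refine Integrable.mono (hbase.const_mul (2 ^ s)) hcont.aestronglyMeasurable.restrict ?_
    filter_upwards [ae_restrict_mem measurableSet_Ioi] with r hr
    have hr1 : (1:ℝ) < r := hr
    have hr0 : (0:ℝ) < r := lt_trans one_pos hr1
    have key : 2 ^ s * (1 + r ^ 2) ^ (-(s / 2)) * r ^ 2 ≤ 2 ^ s * r ^ (2 - s) := by
      have h1 : (1 + r ^ 2) ^ (-(s / 2)) ≤ (r ^ 2 : ℝ) ^ (-(s / 2)) := by
        apply Real.rpow_le_rpow_of_nonpos (by positivity) (by nlinarith) (by linarith)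
      have h2 : ((r ^ 2 : ℝ)) ^ (-(s / 2)) = r ^ (-s) := by
        rw [← Real.rpow_natCast r 2, ← Real.rpow_mul hr0.le]
        congr 1
        push_cast
        ring
      have h3 : r ^ (-s) * r ^ 2 = r ^ (2 - s) := by
        rw [← Real.rpow_natCast r 2, ← Real.rpow_add hr0]
        congr 1
        push_cast
        ring
      calc 2 ^ s * (1 + r ^ 2) ^ (-(s / 2)) * r ^ 2
          ≤ 2 ^ s * (r ^ 2 : ℝ) ^ (-(s / 2)) * r ^ 2 :=
            mul_le_mul_of_nonneg_right
              (mul_le_mul_of_nonneg_left h1 (by positivity)) (sq_nonneg r)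
        _ = 2 ^ s * (r ^ (-s) * r ^ 2) := by rw [h2]; ring
        _ = 2 ^ s * r ^ (2 - s) := by rw [h3]
    have hnn : (0:ℝ) ≤ 2 ^ s * (1 + r ^ 2) ^ (-(s / 2)) * r ^ 2 := by positivity
    have hnn2 : (0:ℝ) ≤ 2 ^ s * r ^ (2 - s) := by positivity
    rw [Real.norm_eq_abs, Real.norm_eq_abs, abs_of_nonneg hnn, abs_of_nonneg hnn2]
    exact key

/-- For every `s > 3` there is `C > 0` such that for all `t : ℝ`,
`∫₀^∞ Ω(t,r)^s r² dr ≤ C`, where `Ω(t,r) = 2/√((1+(t+r)²)(1+(t−r)²))`. -/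
theorem omega_integral_uniform_bound (s : ℝ) (hs : 3 < s) :
    ∃ C : ℝ, 0 < C ∧ ∀ t : ℝ,
      ∫⁻ r in Set.Ioi (0 : ℝ),
          ENNReal.ofReal
            ((2 / Real.sqrt ((1 + (t + r) ^ 2) * (1 + (t - r) ^ 2))) ^ s * r ^ 2)
        ≤ ENNReal.ofReal C := by
  set g : ℝ → ℝ := fun r => 2 ^ s * (1 + r ^ 2) ^ (-(s / 2)) * r ^ 2 with hg
  have hgint : IntegrableOn g (Set.Ioi 0) := omega_dom_integrable s hs
  have hgnn : 0 ≤ᵐ[volume.restrict (Set.Ioi (0:ℝ))] g :=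
    Filter.Eventually.of_forall fun r => by positivity
  refine ⟨max 1 (∫ r in Set.Ioi (0:ℝ), g r), lt_of_lt_of_le one_pos (le_max_left _ _), fun t => ?_⟩
  calc ∫⁻ r in Set.Ioi (0 : ℝ),
        ENNReal.ofReal
          ((2 / Real.sqrt ((1 + (t + r) ^ 2) * (1 + (t - r) ^ 2))) ^ s * r ^ 2)
      ≤ ∫⁻ r in Set.Ioi (0 : ℝ), ENNReal.ofReal (g r) := by
        refine setLIntegral_mono' measurableSet_Ioi fun r _ => ?_
        exact ENNReal.ofReal_le_ofReal (omega_pointwise_bound s (by linarith) t r)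
    _ = ENNReal.ofReal (∫ r in Set.Ioi (0:ℝ), g r) :=
        (ofReal_integral_eq_lintegral_ofReal hgint hgnn).symm
    _ ≤ ENNReal.ofReal (max 1 (∫ r in Set.Ioi (0:ℝ), g r)) :=
        ENNReal.ofReal_le_ofReal (le_max_right _ _)
end

section
/- Let N ≥ 2 be an integer and let μ be the uniform probability measure on the unit sphere S^{N−1} ⊂ ℝ^N. Then for every t ≥ 0, μ( { x ∈ S^{N−1} : |x₁| > t } ) ≤ 2·exp( −(N−1)·t²/2 ), where x₁ denotes the first coordinate of x. -/
open MeasureTheory Real Set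
open scoped ENNReal RealInnerProductSpace

noncomputable def gphi (s : ℝ) : ℝ := (Real.sqrt (2 * Real.pi))⁻¹ * Real.exp (-(1/2) * s^2)

noncomputable def gmeasure (N : ℕ) : Measure (EuclideanSpace ℝ (Fin N)) :=
  (volume : Measure (EuclideanSpace ℝ (Fin N))).withDensity
    fun x => ENNReal.ofReal (∏ i, gphi (x i))

lemma sqrt2pi_pos : 0 < Real.sqrt (2 * Real.pi) :=
  Real.sqrt_pos.2 (by positivity)

lemma gphi_nonneg (s : ℝ) : 0 ≤ gphi s := by
  unfold gphi; positivity

lemma continuous_gphi : Continuous gphi := by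
  unfold gphi
  fun_prop

lemma integrable_gphi : Integrable gphi := by
  unfold gphi
  exact (integrable_exp_neg_mul_sq (by norm_num : (0:ℝ) < 1/2)).const_mul _

lemma integrable_exp_mul_gphi {c : ℝ} (hc : 0 ≤ c) :
    Integrable (fun x => Real.exp (-c * x^2) * gphi x) := by
  have h : (fun x => Real.exp (-c * x^2) * gphi x)
      = fun x => (Real.sqrt (2 * Real.pi))⁻¹ * Real.exp (-(c + 1/2) * x^2) := by
    funext x; unfold gphi
    rw [mul_left_comm, ← Real.exp_add]; ring_nf
  rw [h]
  exact (integrable_exp_neg_mul_sq (by linarith : (0:ℝ) < c + 1/2)).const_mul _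

lemma integral_exp_mul_gphi {c : ℝ} (hc : 0 ≤ c) :
    ∫ x, Real.exp (-c * x^2) * gphi x = (Real.sqrt (1 + 2*c))⁻¹ := by
  have h : (fun x => Real.exp (-c * x^2) * gphi x)
      = fun x => (Real.sqrt (2 * Real.pi))⁻¹ * Real.exp (-(c + 1/2) * x^2) := by
    funext x; unfold gphi
    rw [mul_left_comm, ← Real.exp_add]; ring_nf
  rw [h, MeasureTheory.integral_const_mul, integral_gaussian, ← Real.sqrt_inv,
    ← Real.sqrt_mul (by positivity : (0:ℝ) ≤ (2*Real.pi)⁻¹), ← Real.sqrt_inv]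
  congr 1
  have hpi : (0:ℝ) < Real.pi := Real.pi_pos
  field_simp
  ring

lemma integral_gphi : ∫ x, gphi x = 1 := by
  have := integral_exp_mul_gphi (le_refl (0:ℝ))
  simp only [neg_zero, zero_mul, Real.exp_zero, one_mul] at this
  simpa using this

lemma integral_gphi_Ioi : ∫ x in Ioi (0:ℝ), gphi x = 1/2 := by
  unfold gphi
  rw [MeasureTheory.integral_const_mul, integral_gaussian_Ioi]
  rw [show Real.pi / (1/2) = 2 * Real.pi by ring]
  rw [inv_mul_eq_div, div_div]
  rw [div_eq_iff (by positivity)]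
  ring

lemma integrable_x_gauss : Integrable (fun x : ℝ => x * Real.exp (-(1/2) * x^2)) := by
  have hg : Integrable (fun x : ℝ =>
      Real.exp (-(1/2) * x^2) + x^2 * Real.exp (-(1/2) * x^2)) := by
    apply (integrable_exp_neg_mul_sq (by norm_num : (0:ℝ) < 1/2)).add
    have := integrable_rpow_mul_exp_neg_mul_sq (by norm_num : (0:ℝ) < 1/2)
      (by norm_num : (-1:ℝ) < 2)
    simpa [Real.rpow_natCast] using this
  apply hg.mono'
  · exact (continuous_id.mul (by fun_prop)).aestronglyMeasurable
  · filter_upwards with x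
    have h1 : |x| ≤ 1 + x^2 := by nlinarith [abs_nonneg x, sq_abs x]
    have h2 : (0:ℝ) < Real.exp (-(1/2) * x^2) := Real.exp_pos _
    rw [norm_mul, Real.norm_eq_abs, Real.norm_eq_abs, Real.abs_exp]
    nlinarith

lemma integral_x_gauss_Ioi (r : ℝ) :
    ∫ x in Ioi r, x * Real.exp (-(1/2) * x^2) = Real.exp (-(1/2) * r^2) := by
  have h : ∀ x ∈ Ioi r, HasDerivAt (fun y : ℝ => -Real.exp (-(1/2) * y^2))
      (x * Real.exp (-(1/2) * x^2)) x := by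
    intro x _
    have h1 : HasDerivAt (fun y : ℝ => -(1/2) * y^2) (-x) x := by
      simpa using ((hasDerivAt_pow 2 x).const_mul (-(1/2:ℝ)))
    have := (h1.exp).neg
    exact this.congr_deriv (by ring)
  have hcont : ContinuousOn (fun y : ℝ => -Real.exp (-(1/2) * y^2)) (Ici r) := by fun_prop
  have hint : IntegrableOn (fun x : ℝ => x * Real.exp (-(1/2) * x^2)) (Ioi r) :=
    integrable_x_gauss.integrableOn
  have htend : Filter.Tendsto (fun y : ℝ => -Real.exp (-(1/2) * y^2)) Filter.atTop (nhds 0) := by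
    rw [show (0:ℝ) = -0 by ring]
    apply Filter.Tendsto.neg
    apply Real.tendsto_exp_atBot.comp
    apply Filter.Tendsto.const_mul_atTop_of_neg (by norm_num : (-(1/2):ℝ) < 0)
    exact Filter.tendsto_pow_atTop (by norm_num)
  have := MeasureTheory.integral_Ioi_of_hasDerivAt_of_tendsto (hcont.continuousWithinAt (by simp : r ∈ Ici r)) h hint htend
  rw [this]; ring

lemma integral_x_gauss_interval (r : ℝ) :
    ∫ x in (0:ℝ)..r, x * Real.exp (-(1/2) * x^2) = 1 - Real.exp (-(1/2) * r^2) := by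
  have h : ∀ x ∈ Set.uIcc (0:ℝ) r, HasDerivAt (fun y : ℝ => -Real.exp (-(1/2) * y^2))
      (x * Real.exp (-(1/2) * x^2)) x := by
    intro x _
    have h1 : HasDerivAt (fun y : ℝ => -(1/2) * y^2) (-x) x := by
      simpa using ((hasDerivAt_pow 2 x).const_mul (-(1/2:ℝ)))
    have := (h1.exp).neg
    exact this.congr_deriv (by ring)
  rw [intervalIntegral.integral_eq_sub_of_hasDerivAt h
    ((continuous_id.mul (by fun_prop)).intervalIntegrable 0 r)]
  simp [Real.exp_zero]
  ring

lemma gauss_tail (r : ℝ) (hr : 0 ≤ r) :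
    ∫ x in {x : ℝ | r < |x|}, gphi x ≤ Real.exp (-(1/2) * r^2) := by
  have hset : {x : ℝ | r < |x|} = Iio (-r) ∪ Ioi r := by
    ext x
    simp only [mem_setOf_eq, mem_union, mem_Iio, mem_Ioi, lt_abs, lt_neg]
    tauto
  have hdisj : Disjoint (Iio (-r)) (Ioi r) :=
    (Set.Iio_disjoint_Ici (by linarith)).mono_right Set.Ioi_subset_Ici_self
  have hsplit : ∫ x in {x : ℝ | r < |x|}, gphi x
      = (∫ x in Iio (-r), gphi x) + ∫ x in Ioi r, gphi x := by
    rw [hset]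
    exact setIntegral_union hdisj measurableSet_Ioi integrable_gphi.integrableOn
      integrable_gphi.integrableOn
  have hneg : ∫ x in Iio (-r), gphi x = ∫ x in Ioi r, gphi x := by
    rw [setIntegral_congr_set (MeasureTheory.Iio_ae_eq_Iic (a := -r)),
      ← integral_comp_neg_Ioi]
    congr 1
    funext x
    unfold gphi
    ring_nf
  rw [hsplit, hneg, ← two_mul]
  rcases le_or_gt (2 * (Real.sqrt (2 * Real.pi))⁻¹) r with hcase | hcase
  · -- large r : Mills-type bound
    have hrpos : 0 < r := lt_of_lt_of_le (by positivity) hcase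
    have hmono : ∫ x in Ioi r, gphi x
        ≤ ∫ x in Ioi r, ((Real.sqrt (2 * Real.pi))⁻¹ * r⁻¹) * (x * Real.exp (-(1/2) * x^2)) := by
      apply setIntegral_mono_on integrable_gphi.integrableOn
        (integrable_x_gauss.const_mul _).integrableOn measurableSet_Ioi
      intro x hx
      have hx' : r < x := hx
      unfold gphi
      rw [show (Real.sqrt (2 * Real.pi))⁻¹ * r⁻¹ * (x * Real.exp (-(1/2) * x^2))
          = (Real.sqrt (2 * Real.pi))⁻¹ * ((r⁻¹ * x) * Real.exp (-(1/2) * x^2)) by ring]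
      have h1 : (1:ℝ) ≤ r⁻¹ * x := by
        rw [← div_eq_inv_mul, le_div_iff₀ hrpos]
        linarith
      have := Real.exp_pos (-(1/2) * x^2)
      exact mul_le_mul_of_nonneg_left (le_mul_of_one_le_left this.le h1) (by positivity)
    rw [MeasureTheory.integral_const_mul, integral_x_gauss_Ioi] at hmono
    have h2 : 2 * ((Real.sqrt (2 * Real.pi))⁻¹ * r⁻¹) ≤ 1 := by
      rw [← mul_assoc, ← div_eq_mul_inv, div_le_one hrpos]
      linarith
    have he := Real.exp_pos (-(1/2) * r^2)
    calc 2 * ∫ x in Ioi r, gphi x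
        ≤ 2 * ((Real.sqrt (2 * Real.pi))⁻¹ * r⁻¹ * Real.exp (-(1/2) * r^2)) := by linarith
      _ ≤ Real.exp (-(1/2) * r^2) := by nlinarith
  · -- small r
    have hIoi : Ioi (0:ℝ) = Ioc 0 r ∪ Ioi r := (Ioc_union_Ioi_eq_Ioi hr).symm
    have hsum : (1:ℝ)/2 = (∫ x in Ioc (0:ℝ) r, gphi x) + ∫ x in Ioi r, gphi x := by
      rw [← integral_gphi_Ioi, hIoi]
      exact setIntegral_union (Ioc_disjoint_Ioi le_rfl) measurableSet_Ioi
        integrable_gphi.integrableOn integrable_gphi.integrableOn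
    have hlow : 1 - Real.exp (-(1/2) * r^2) ≤ 2 * ∫ x in Ioc (0:ℝ) r, gphi x := by
      rw [← integral_x_gauss_interval r, ← intervalIntegral.integral_of_le hr,
        show (2:ℝ) * ∫ x in (0:ℝ)..r, gphi x = ∫ x in (0:ℝ)..r, 2 * gphi x by
          rw [intervalIntegral.integral_const_mul]]
      apply intervalIntegral.integral_mono_on hr
        integrable_x_gauss.intervalIntegrable
        (integrable_gphi.const_mul 2).intervalIntegrable
      intro x hx
      obtain ⟨hx0, hxr⟩ := hx
      unfold gphi
      have h1 : x ≤ 2 * (Real.sqrt (2 * Real.pi))⁻¹ := by linarith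
      have := Real.exp_pos (-(1/2) * x^2)
      nlinarith
    linarith

lemma gauss_tail_lintegral (r : ℝ) (hr : 0 ≤ r) :
    ∫⁻ x in {x : ℝ | r < |x|}, ENNReal.ofReal (gphi x)
      ≤ ENNReal.ofReal (Real.exp (-(1/2) * r^2)) := by
  rw [← ofReal_integral_eq_lintegral_ofReal integrable_gphi.integrableOn
    (ae_of_all _ gphi_nonneg)]
  exact ENNReal.ofReal_le_ofReal (gauss_tail r hr)

lemma pi_tail_bound (m : ℕ) (t : ℝ) (ht0 : 0 ≤ t) (ht1 : t < 1) :
    ∫⁻ y in {y : Fin (m+1) → ℝ | t * Real.sqrt (∑ i, (y i)^2) < |y 0|},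
      ENNReal.ofReal (∏ i, gphi (y i))
      ≤ ENNReal.ofReal ((Real.sqrt (1 - t^2))^m) := by
  have h1t : (0:ℝ) < 1 - t^2 := by nlinarith
  set c : ℝ := t^2 / (2 * (1 - t^2)) with hc_def
  have hc : 0 ≤ c := by positivity
  set D : (Fin (m+1) → ℝ) → ℝ≥0∞ := fun y => ENNReal.ofReal (∏ i, gphi (y i)) with hD
  set S : Set (Fin (m+1) → ℝ) := {y | t * Real.sqrt (∑ i, (y i)^2) < |y 0|} with hS
  have hScont1 : Continuous fun y : Fin (m+1) → ℝ => t * Real.sqrt (∑ i, (y i)^2) := by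
    apply continuous_const.mul
    apply Real.continuous_sqrt.comp
    exact continuous_finset_sum _ fun i _ => (continuous_apply i).pow 2
  have hScont2 : Continuous fun y : Fin (m+1) → ℝ => |y 0| := by fun_prop
  have hSopen : IsOpen S := isOpen_lt hScont1 hScont2
  have hDmeas : Measurable D := by
    apply ENNReal.measurable_ofReal.comp
    exact Finset.measurable_prod _ fun i _ =>
      continuous_gphi.measurable.comp (measurable_pi_apply i)
  have hFmeas : Measurable (S.indicator D) := hDmeas.indicator hSopen.measurableSet
  have mp := measurePreserving_piFinSuccAbove (fun _ : Fin (m+1) => (volume : Measure ℝ)) 0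
  set S₂ : Set (ℝ × (Fin m → ℝ)) :=
    {p | t * Real.sqrt (p.1^2 + ∑ j, (p.2 j)^2) < |p.1|} with hS₂
  set H : ℝ × (Fin m → ℝ) → ℝ≥0∞ :=
    fun p => S₂.indicator (fun q => ENNReal.ofReal (gphi q.1 * ∏ j, gphi (q.2 j))) p with hH
  have hpoint : ∀ p : ℝ × (Fin m → ℝ),
      S.indicator D ((MeasurableEquiv.piFinSuccAbove (fun _ : Fin (m+1) => ℝ) 0).symm p)
        = H p := by
    rintro ⟨a, z⟩
    have hy : ∀ j : Fin m,
        ((MeasurableEquiv.piFinSuccAbove (fun _ : Fin (m+1) => ℝ) 0).symm (a, z))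
          ((0:Fin (m+1)).succAbove j) = z j := by
      intro j
      simp [MeasurableEquiv.piFinSuccAbove, Fin.insertNthEquiv]
    have hy0 : ((MeasurableEquiv.piFinSuccAbove (fun _ : Fin (m+1) => ℝ) 0).symm (a, z)) 0 = a := by
      simp [MeasurableEquiv.piFinSuccAbove, Fin.insertNthEquiv]
    set y := (MeasurableEquiv.piFinSuccAbove (fun _ : Fin (m+1) => ℝ) 0).symm (a, z) with hy_def
    have hsum : ∑ i, (y i)^2 = a^2 + ∑ j, (z j)^2 := by
      rw [Fin.sum_univ_succAbove (fun i => (y i)^2) 0, hy0]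
      all_goals exact congrArg (a^2 + ·) (Finset.sum_congr rfl fun j _ => by rw [hy j])
    have hprod : ∏ i, gphi (y i) = gphi a * ∏ j, gphi (z j) := by
      rw [Fin.prod_univ_succAbove (fun i => gphi (y i)) 0, hy0]
      all_goals exact congrArg (gphi a * ·) (Finset.prod_congr rfl fun j _ => by rw [hy j])
    have hmem : y ∈ S ↔ (a, z) ∈ S₂ := by
      simp only [hS, hS₂, Set.mem_setOf_eq]
      rw [hsum, hy0]
    by_cases h : (a, z) ∈ S₂
    · have h' : y ∈ S := hmem.2 h
      simp only [hH, hD]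
      rw [Set.indicator_of_mem h', Set.indicator_of_mem h, hprod]
    · have h' : y ∉ S := fun hmm => h (hmem.1 hmm)
      simp only [hH]
      rw [Set.indicator_of_notMem h', Set.indicator_of_notMem h]
  have htransfer : ∫⁻ y in S, D y
      = ∫⁻ p, H p ∂((volume : Measure ℝ).prod (volume : Measure (Fin m → ℝ))) := by
    rw [← lintegral_indicator hSopen.measurableSet, volume_pi,
      ← (MeasurePreserving.symm (MeasurableEquiv.piFinSuccAbove (fun _ : Fin (m+1) => ℝ) 0) mp).lintegral_comp hFmeas]
    rw [show ((volume : Measure ℝ).prod (volume : Measure (Fin m → ℝ)))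
        = ((volume : Measure ℝ).prod (Measure.pi fun _ : Fin m => (volume : Measure ℝ))) from by
      rw [volume_pi]]
    exact lintegral_congr fun p => hpoint p
  rw [htransfer]
  have hHmeas : Measurable H := by
    apply Measurable.indicator
    · apply ENNReal.measurable_ofReal.comp
      apply Measurable.mul
      · exact continuous_gphi.measurable.comp measurable_fst
      · exact Finset.measurable_prod _ fun j _ =>
          continuous_gphi.measurable.comp ((measurable_pi_apply j).comp measurable_snd)
    · apply IsOpen.measurableSet
      apply isOpen_lt
      · apply continuous_const.mul
        apply Real.continuous_sqrt.comp
        apply Continuous.add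
        · exact (continuous_fst).pow 2
        · exact continuous_finset_sum _ fun j _ => ((continuous_apply j).comp continuous_snd).pow 2
      · exact continuous_abs.comp continuous_fst
  rw [lintegral_prod_symm H hHmeas.aemeasurable]
  have hinner : ∀ z : Fin m → ℝ,
      (∫⁻ a, H (a, z)) ≤ ENNReal.ofReal (∏ j, (Real.exp (-c * (z j)^2) * gphi (z j))) := by
    intro z
    set Sz : ℝ := ∑ j, (z j)^2 with hSz
    have hSznn : 0 ≤ Sz := Finset.sum_nonneg fun j _ => sq_nonneg _
    set r : ℝ := Real.sqrt (t^2 * Sz / (1 - t^2)) with hr_def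
    have hr : 0 ≤ r := Real.sqrt_nonneg _
    have hsetz : ∀ a : ℝ, ((a, z) ∈ S₂) ↔ r < |a| := by
      intro a
      simp only [hS₂, Set.mem_setOf_eq]
      rw [show t * Real.sqrt (a^2 + Sz) = Real.sqrt (t^2 * (a^2 + Sz)) by
          rw [Real.sqrt_mul (sq_nonneg t), Real.sqrt_sq ht0],
        ← Real.sqrt_sq_eq_abs (x := a), hr_def]
      rw [Real.sqrt_lt_sqrt_iff (mul_nonneg (sq_nonneg t) (by nlinarith [sq_nonneg a])),
        Real.sqrt_lt_sqrt_iff (div_nonneg (mul_nonneg (sq_nonneg t) hSznn) h1t.le)]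
      constructor
      · intro h
        rw [div_lt_iff₀ h1t]
        nlinarith
      · intro h
        rw [div_lt_iff₀ h1t] at h
        nlinarith
    have hHz : ∀ a : ℝ, H (a, z)
        = ({x : ℝ | r < |x|}).indicator
            (fun a => ENNReal.ofReal (gphi a) * ENNReal.ofReal (∏ j, gphi (z j))) a := by
      intro a
      by_cases h : r < |a|
      · simp only [hH]
        rw [Set.indicator_of_mem ((hsetz a).2 h), Set.indicator_of_mem (by exact h),
          ENNReal.ofReal_mul (gphi_nonneg a)]
      · simp only [hH]
        rw [Set.indicator_of_notMem (fun hmm => h ((hsetz a).1 hmm)),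
          Set.indicator_of_notMem (by exact h)]
    calc ∫⁻ a, H (a, z)
        = ∫⁻ a in {x : ℝ | r < |x|},
            ENNReal.ofReal (gphi a) * ENNReal.ofReal (∏ j, gphi (z j)) := by
          rw [← lintegral_indicator (isOpen_lt continuous_const continuous_abs).measurableSet]
          exact lintegral_congr hHz
      _ = (∫⁻ a in {x : ℝ | r < |x|}, ENNReal.ofReal (gphi a))
            * ENNReal.ofReal (∏ j, gphi (z j)) :=
          lintegral_mul_const _ (ENNReal.measurable_ofReal.comp continuous_gphi.measurable)
      _ ≤ ENNReal.ofReal (Real.exp (-(1/2) * r^2)) * ENNReal.ofReal (∏ j, gphi (z j)) :=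
          mul_le_mul_left (gauss_tail_lintegral r hr) _
      _ = ENNReal.ofReal (∏ j, (Real.exp (-c * (z j)^2) * gphi (z j))) := by
          rw [← ENNReal.ofReal_mul (Real.exp_pos _).le]
          congr 1
          have hrsq : r^2 = t^2 * Sz / (1 - t^2) :=
            Real.sq_sqrt (div_nonneg (mul_nonneg (sq_nonneg t) hSznn) h1t.le)
          have hexp : Real.exp (-(1/2) * r^2) = ∏ j, Real.exp (-c * (z j)^2) := by
            rw [hrsq, show -(1/2) * (t^2 * Sz / (1 - t^2)) = -c * Sz by
              rw [hc_def]; field_simp; try ring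
              , hSz, Finset.mul_sum, Real.exp_sum]
          rw [hexp, Finset.prod_mul_distrib]
  calc ∫⁻ z, (∫⁻ a, H (a, z)) ∂(volume : Measure (Fin m → ℝ))
      ≤ ∫⁻ z, ENNReal.ofReal (∏ j, (Real.exp (-c * (z j)^2) * gphi (z j)))
          ∂(volume : Measure (Fin m → ℝ)) := lintegral_mono hinner
    _ = ENNReal.ofReal (∫ z : Fin m → ℝ, ∏ j, (Real.exp (-c * (z j)^2) * gphi (z j))) := by
        rw [ofReal_integral_eq_lintegral_ofReal]
        · exact Integrable.fintype_prod (𝕜 := ℝ)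
            (f := fun (_ : Fin m) (x : ℝ) => Real.exp (-c * x^2) * gphi x)
            fun _ => integrable_exp_mul_gphi hc
        · exact Filter.Eventually.of_forall fun z => Finset.prod_nonneg fun j _ =>
            mul_nonneg (Real.exp_pos _).le (gphi_nonneg _)
    _ = ENNReal.ofReal (((Real.sqrt (1 + 2*c))⁻¹) ^ m) := by
        rw [volume_pi, MeasureTheory.integral_fintype_prod_eq_pow (ι := Fin m)
          (f := fun x : ℝ => Real.exp (-c * x^2) * gphi x), integral_exp_mul_gphi hc,
          Fintype.card_fin]
    _ = ENNReal.ofReal ((Real.sqrt (1 - t^2))^m) := by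
        have heq : (Real.sqrt (1 + 2*c))⁻¹ = Real.sqrt (1 - t^2) := by
          rw [show 1 + 2*c = (1 - t^2)⁻¹ by rw [hc_def]; field_simp [ne_of_gt h1t]; try ring,
            Real.sqrt_inv, inv_inv]
        rw [heq]


lemma prod_gphi_eq {N : ℕ} (x : EuclideanSpace ℝ (Fin N)) :
    ∏ i, gphi (x i) = ((Real.sqrt (2 * Real.pi))⁻¹)^N * Real.exp (-(1/2) * ‖x‖^2) := by
  have hnorm : ‖x‖^2 = ∑ i, (x i)^2 := by
    rw [EuclideanSpace.norm_eq, Real.sq_sqrt (by positivity)]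
    exact Finset.sum_congr rfl fun i _ => by rw [Real.norm_eq_abs, sq_abs]
  unfold gphi
  rw [Finset.prod_mul_distrib, Finset.prod_const, Finset.card_univ, Fintype.card_fin,
    ← Real.exp_sum]
  congr 1
  rw [hnorm, Finset.mul_sum]

lemma measurable_gdens {N : ℕ} :
    Measurable fun x : EuclideanSpace ℝ (Fin N) => ENNReal.ofReal (∏ i, gphi (x i)) := by
  have : Continuous fun x : EuclideanSpace ℝ (Fin N) => ∏ i, gphi (x i) := by
    have h : (fun x : EuclideanSpace ℝ (Fin N) => ∏ i, gphi (x i))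
        = fun x => ((Real.sqrt (2 * Real.pi))⁻¹)^N * Real.exp (-(1/2) * ‖x‖^2) :=
      funext prod_gphi_eq
    rw [h]
    fun_prop
  exact ENNReal.measurable_ofReal.comp this.measurable

lemma lintegral_E_pi {N : ℕ} (f : (Fin N → ℝ) → ℝ≥0∞) (hf : Measurable f) :
    ∫⁻ x : EuclideanSpace ℝ (Fin N),
        f ((MeasurableEquiv.toLp 2 (Fin N → ℝ)).symm x) ∂volume
      = ∫⁻ y : Fin N → ℝ, f y ∂volume :=
  (EuclideanSpace.volume_preserving_symm_measurableEquiv_toLp (Fin N)).lintegral_comp hf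

instance gmeasure_prob (N : ℕ) : IsProbabilityMeasure (gmeasure N) := by
  constructor
  rw [gmeasure, withDensity_apply _ MeasurableSet.univ, Measure.restrict_univ]
  have h := lintegral_E_pi (N := N) (fun y => ENNReal.ofReal (∏ i, gphi (y i)))
    (by
      apply ENNReal.measurable_ofReal.comp
      exact Finset.measurable_prod _ fun i _ =>
        continuous_gphi.measurable.comp (measurable_pi_apply i))
  have h2 : (∫⁻ x : EuclideanSpace ℝ (Fin N),
      ENNReal.ofReal (∏ i, gphi (((MeasurableEquiv.toLp 2 (Fin N → ℝ)).symm x) i)) ∂volume)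
      = ∫⁻ x : EuclideanSpace ℝ (Fin N), ENNReal.ofReal (∏ i, gphi (x i)) ∂volume := rfl
  rw [h2] at h
  rw [h, volume_pi, ofReal_integral_eq_lintegral_ofReal
    (Integrable.fintype_prod (𝕜 := ℝ) (f := fun (_ : Fin N) => gphi) fun _ => integrable_gphi)
    (Filter.Eventually.of_forall fun y =>
      Finset.prod_nonneg fun i _ => gphi_nonneg _) |>.symm]
  rw [MeasureTheory.integral_fintype_prod_eq_pow (ι := Fin N) gphi, integral_gphi]
  simp

lemma gmeasure_inv {N : ℕ} (A : EuclideanSpace ℝ (Fin N) ≃ₗᵢ[ℝ] EuclideanSpace ℝ (Fin N)) :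
    Measure.map A (gmeasure N) = gmeasure N := by
  have hd : (fun x : EuclideanSpace ℝ (Fin N) => ENNReal.ofReal (∏ i, gphi (x i)))
      = fun x => ENNReal.ofReal
          (((Real.sqrt (2 * Real.pi))⁻¹)^N * Real.exp (-(1/2) * ‖x‖^2)) :=
    funext fun x => by rw [prod_gphi_eq]
  ext s hs
  rw [Measure.map_apply A.continuous.measurable hs, gmeasure,
    withDensity_apply _ (hs.preimage A.continuous.measurable),
    withDensity_apply _ hs,
    ← lintegral_indicator (hs.preimage A.continuous.measurable),
    ← lintegral_indicator hs]
  have key : ∀ x, (A ⁻¹' s).indicator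
      (fun x : EuclideanSpace ℝ (Fin N) => ENNReal.ofReal (∏ i, gphi (x i))) x
      = s.indicator
        (fun x : EuclideanSpace ℝ (Fin N) => ENNReal.ofReal (∏ i, gphi (x i))) (A x) := by
    intro x
    by_cases h : A x ∈ s
    · rw [Set.indicator_of_mem (show x ∈ A ⁻¹' s from h), Set.indicator_of_mem h,
        prod_gphi_eq x, prod_gphi_eq (A x), A.norm_map]
    · rw [Set.indicator_of_notMem (show x ∉ A ⁻¹' s from h), Set.indicator_of_notMem h]
  rw [lintegral_congr key]
  exact A.measurePreserving.lintegral_comp (measurable_gdens.indicator hs)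

lemma volume_zero_singleton {N : ℕ} (hN : 1 ≤ N) :
    (volume : Measure (EuclideanSpace ℝ (Fin N))) {0} = 0 := by
  have h := (EuclideanSpace.volume_preserving_symm_measurableEquiv_toLp (Fin N)).measure_preimage
    (measurableSet_singleton (0 : Fin N → ℝ)).nullMeasurableSet
  have hpre : (MeasurableEquiv.toLp 2 (Fin N → ℝ)).symm ⁻¹' {(0 : Fin N → ℝ)}
      = ({0} : Set (EuclideanSpace ℝ (Fin N))) := by ext x; simp
  rw [hpre] at h
  rw [h]
  rw [← Set.univ_pi_singleton (0 : Fin N → ℝ), volume_pi_pi]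
  simp only [Real.volume_singleton, Pi.zero_apply]
  rw [Finset.prod_const, zero_pow]
  simp only [Finset.card_univ, Fintype.card_fin]
  omega

lemma gmeasure_zero {N : ℕ} (hN : 1 ≤ N) : gmeasure N {0} = 0 :=
  withDensity_absolutelyContinuous _ _ (volume_zero_singleton hN)

lemma exists_isometry {N : ℕ} (v u : EuclideanSpace ℝ (Fin N)) (h : ‖v‖ = ‖u‖) :
    ∃ A : EuclideanSpace ℝ (Fin N) ≃ₗᵢ[ℝ] EuclideanSpace ℝ (Fin N), A v = u :=
  ⟨Submodule.reflection (ℝ ∙ (v - u))ᗮ, Submodule.reflection_sub h⟩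
attribute [instance] gmeasure_prob

lemma key_eq {N : ℕ} (hN : 1 ≤ N) (i0 : Fin N)
    (μ : Measure (EuclideanSpace ℝ (Fin N))) [IsProbabilityMeasure μ]
    (hsphere : μ (Metric.sphere (0 : EuclideanSpace ℝ (Fin N)) 1) = 1)
    (hinv : ∀ A : EuclideanSpace ℝ (Fin N) ≃ₗᵢ[ℝ] EuclideanSpace ℝ (Fin N),
      Measure.map A μ = μ)
    (t : ℝ) :
    μ {x | t < |x i0|} = gmeasure N {g | t * ‖g‖ < |g i0|} := by
  set e0 : EuclideanSpace ℝ (Fin N) := EuclideanSpace.single i0 (1:ℝ) with he0_def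
  have he0 : ‖e0‖ = 1 := by
    rw [he0_def, EuclideanSpace.norm_single, norm_one]
  have hin : ∀ h : EuclideanSpace ℝ (Fin N), (inner ℝ e0 h : ℝ) = h i0 := fun h => by
    rw [he0_def, EuclideanSpace.inner_single_left]
    simp
  have hcoord_cont : Continuous fun x : EuclideanSpace ℝ (Fin N) => x i0 := by
    have : (fun x : EuclideanSpace ℝ (Fin N) => x i0) = fun x : EuclideanSpace ℝ (Fin N) => (inner ℝ e0 x : ℝ) := funext fun x => (hin x).symm
    rw [this]
    exact continuous_const.inner continuous_id
  have hset0 : MeasurableSet {x : EuclideanSpace ℝ (Fin N) | t < |x i0|} :=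
    (isOpen_lt continuous_const hcoord_cont.abs).measurableSet
  have hsetg0 : MeasurableSet {g : EuclideanSpace ℝ (Fin N) | t * ‖g‖ < |g i0|} :=
    (isOpen_lt (continuous_const.mul continuous_norm) hcoord_cont.abs).measurableSet
  -- invariance on the μ side
  have hmu : ∀ u : EuclideanSpace ℝ (Fin N), ‖u‖ = 1 → μ {x | t < |(inner ℝ u x : ℝ)|} = μ {x | t < |x i0|} := by
    intro u hu
    obtain ⟨A, hA⟩ := exists_isometry e0 u (by rw [he0, hu])
    have hset : MeasurableSet {x : EuclideanSpace ℝ (Fin N) | t < |(inner ℝ u x : ℝ)|} :=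
      (isOpen_lt continuous_const (continuous_const.inner continuous_id).abs).measurableSet
    conv_lhs => rw [← hinv A]
    rw [Measure.map_apply A.continuous.measurable hset]
    congr 1
    ext h
    simp only [Set.mem_preimage, Set.mem_setOf_eq]
    rw [← hA, A.inner_map_map, hin]
  -- invariance on the γ side
  have hgamma : ∀ u : EuclideanSpace ℝ (Fin N), ‖u‖ = 1 →
      gmeasure N {g | t * ‖g‖ < |(inner ℝ g u : ℝ)|} = gmeasure N {g | t * ‖g‖ < |g i0|} := by
    intro u hu
    obtain ⟨A, hA⟩ := exists_isometry e0 u (by rw [he0, hu])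
    have hset : MeasurableSet {g : EuclideanSpace ℝ (Fin N) | t * ‖g‖ < |(inner ℝ g u : ℝ)|} :=
      (isOpen_lt (continuous_const.mul continuous_norm)
        (continuous_id.inner continuous_const).abs).measurableSet
    conv_lhs => rw [← gmeasure_inv A]
    rw [Measure.map_apply A.continuous.measurable hset]
    congr 1
    ext h
    simp only [Set.mem_preimage, Set.mem_setOf_eq]
    rw [← hA, A.inner_map_map, A.norm_map, real_inner_comm, hin]
  -- the product set
  set T : Set (EuclideanSpace ℝ (Fin N) × EuclideanSpace ℝ (Fin N)) := {p | t * ‖p.2‖ < |(inner ℝ p.2 p.1 : ℝ)|} with hT_def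
  have hT : MeasurableSet T := by
    apply IsOpen.measurableSet
    apply isOpen_lt
    · exact continuous_const.mul (continuous_norm.comp continuous_snd)
    · exact (continuous_snd.inner continuous_fst).abs
  have step1 : (μ.prod (gmeasure N)) T = gmeasure N {g : EuclideanSpace ℝ (Fin N) | t * ‖g‖ < |g i0|} := by
    rw [Measure.prod_apply hT]
    have hae : ∀ᵐ x ∂μ, x ∈ Metric.sphere (0 : EuclideanSpace ℝ (Fin N)) 1 := by
      rw [ae_iff]
      have : {x : EuclideanSpace ℝ (Fin N) | ¬ x ∈ Metric.sphere (0 : EuclideanSpace ℝ (Fin N)) 1} = (Metric.sphere (0 : EuclideanSpace ℝ (Fin N)) 1)ᶜ := rfl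
      rw [this, measure_compl Metric.isClosed_sphere.measurableSet (measure_ne_top μ _),
        hsphere, measure_univ]
      simp
    have hcongr : (fun x => gmeasure N (Prod.mk x ⁻¹' T))
        =ᵐ[μ] fun _ => gmeasure N {g : EuclideanSpace ℝ (Fin N) | t * ‖g‖ < |g i0|} := by
      filter_upwards [hae] with x hx
      have hx1 : ‖x‖ = 1 := by rwa [mem_sphere_zero_iff_norm] at hx
      have hpre : Prod.mk x ⁻¹' T = {g : EuclideanSpace ℝ (Fin N) | t * ‖g‖ < |(inner ℝ g x : ℝ)|} := rfl
      rw [hpre, hgamma x hx1]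
    rw [lintegral_congr_ae hcongr, lintegral_const, measure_univ, mul_one]
  have step2 : (μ.prod (gmeasure N)) T = μ {x : EuclideanSpace ℝ (Fin N) | t < |x i0|} := by
    rw [Measure.prod_apply_symm hT]
    have hae : ∀ᵐ g ∂(gmeasure N), g ≠ 0 := by
      rw [ae_iff]
      have : {g : EuclideanSpace ℝ (Fin N) | ¬ g ≠ 0} = {0} := by ext g; simp
      rw [this]
      exact gmeasure_zero hN
    have hcongr : (fun g => μ ((fun x => (x, g)) ⁻¹' T))
        =ᵐ[gmeasure N] fun _ => μ {x : EuclideanSpace ℝ (Fin N) | t < |x i0|} := by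
      filter_upwards [hae] with g hg
      have hng : 0 < ‖g‖ := norm_pos_iff.2 hg
      have hpre : (fun x => (x, g)) ⁻¹' T = {x : EuclideanSpace ℝ (Fin N) | t * ‖g‖ < |(inner ℝ g x : ℝ)|} := rfl
      set u : EuclideanSpace ℝ (Fin N) := ‖g‖⁻¹ • g with hu_def
      have hu : ‖u‖ = 1 := by
        rw [hu_def, norm_smul, norm_inv, norm_norm, inv_mul_cancel₀ hng.ne']
      have hsets : {x : EuclideanSpace ℝ (Fin N) | t * ‖g‖ < |(inner ℝ g x : ℝ)|} = {x : EuclideanSpace ℝ (Fin N) | t < |(inner ℝ u x : ℝ)|} := by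
        ext x
        simp only [Set.mem_setOf_eq, hu_def]
        rw [real_inner_smul_left, abs_mul, abs_inv, abs_norm, ← div_eq_inv_mul,
          lt_div_iff₀ hng]
      rw [hpre, hsets, hmu u hu]
    rw [lintegral_congr_ae hcongr, lintegral_const, measure_univ, mul_one]
  rw [← step2, step1]

/-- Concentration of measure on the sphere: let `N ≥ 2` and let `μ` be the uniform
probability measure on the unit sphere `S^{N−1} ⊂ ℝ^N` (i.e. the unique Borel
probability measure giving full mass to the sphere and invariant under every
linear isometry of `ℝ^N`). Then for every `t ≥ 0`,
`μ {x : |x₁| > t} ≤ 2 exp(−(N−1) t²/2)`. -/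
theorem sphere_coordinate_concentration (N : ℕ) (hN : 2 ≤ N)
    (μ : Measure (EuclideanSpace ℝ (Fin N))) [IsProbabilityMeasure μ]
    (hsphere : μ (Metric.sphere (0 : EuclideanSpace ℝ (Fin N)) 1) = 1)
    (hinv : ∀ A : EuclideanSpace ℝ (Fin N) ≃ₗᵢ[ℝ] EuclideanSpace ℝ (Fin N),
      Measure.map A μ = μ)
    (t : ℝ) (ht : 0 ≤ t) :
    μ {x : EuclideanSpace ℝ (Fin N) | t < |x ⟨0, by omega⟩|}
      ≤ ENNReal.ofReal (2 * Real.exp (-((N : ℝ) - 1) * t ^ 2 / 2)) := by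
  obtain ⟨m, rfl⟩ : ∃ m, N = m + 1 := ⟨N - 1, by omega⟩
  rw [key_eq (by omega) _ μ hsphere hinv t]
  rcases le_or_gt 1 t with hcase | hcase
  · -- `t ≥ 1` : the set is empty
    have hempty : {g : EuclideanSpace ℝ (Fin (m+1)) | t * ‖g‖ < |g ⟨0, by omega⟩|} = ∅ := by
      apply Set.eq_empty_iff_forall_notMem.2
      intro g hg
      simp only [Set.mem_setOf_eq] at hg
      have h1 : |g ⟨0, by omega⟩| ≤ ‖g‖ := by
        have h := abs_real_inner_le_norm
          (EuclideanSpace.single (⟨0, by omega⟩ : Fin (m+1)) (1:ℝ)) g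
        rw [EuclideanSpace.inner_single_left] at h
        simpa [EuclideanSpace.norm_single] using h
      have h2 : ‖g‖ ≤ t * ‖g‖ := le_mul_of_one_le_left (norm_nonneg g) hcase
      linarith
    rw [hempty]
    simp
  · -- `t < 1` : Gaussian bound
    have hnorm : ∀ x : EuclideanSpace ℝ (Fin (m+1)),
        ‖x‖ = Real.sqrt (∑ i, (x i)^2) := by
      intro x
      rw [EuclideanSpace.norm_eq]
      congr 1
      exact Finset.sum_congr rfl fun i _ => by rw [Real.norm_eq_abs, sq_abs]
    have hmeas_pi : MeasurableSet
        {y : Fin (m+1) → ℝ | t * Real.sqrt (∑ i, (y i)^2) < |y 0|} := by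
      apply IsOpen.measurableSet
      apply isOpen_lt
      · apply continuous_const.mul
        apply Real.continuous_sqrt.comp
        exact continuous_finset_sum _ fun i _ => (continuous_apply i).pow 2
      · fun_prop
    have hsetE : {g : EuclideanSpace ℝ (Fin (m+1)) | t * ‖g‖ < |g ⟨0, by omega⟩|}
        = (MeasurableEquiv.toLp 2 (Fin (m+1) → ℝ)).symm
            ⁻¹' {y : Fin (m+1) → ℝ | t * Real.sqrt (∑ i, (y i)^2) < |y 0|} := by
      ext x
      simp only [Set.mem_setOf_eq, Set.mem_preimage]
      rw [hnorm x]
      exact Iff.rfl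
    calc gmeasure (m+1) {g : EuclideanSpace ℝ (Fin (m+1)) | t * ‖g‖ < |g ⟨0, by omega⟩|}
        = ∫⁻ y in {y : Fin (m+1) → ℝ | t * Real.sqrt (∑ i, (y i)^2) < |y 0|},
            ENNReal.ofReal (∏ i, gphi (y i)) ∂volume := by
          rw [gmeasure, hsetE,
            withDensity_apply _ (hmeas_pi.preimage (MeasurableEquiv.measurable _))]
          exact (EuclideanSpace.volume_preserving_symm_measurableEquiv_toLp
            (Fin (m+1))).setLIntegral_comp_preimage_emb
            (MeasurableEquiv.measurableEmbedding _)
            (fun y => ENNReal.ofReal (∏ i, gphi (y i))) _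
      _ ≤ ENNReal.ofReal ((Real.sqrt (1 - t^2))^m) := pi_tail_bound m t ht hcase
      _ ≤ ENNReal.ofReal (2 * Real.exp (-(((m:ℝ)+1) - 1) * t ^ 2 / 2)) := by
          apply ENNReal.ofReal_le_ofReal
          have h2 : 1 - t^2 ≤ Real.exp (-(t^2)) := by
            have := Real.add_one_le_exp (-(t^2)); linarith
          have h1 : Real.sqrt (1 - t^2) ≤ Real.exp (-(t^2)/2) := by
            calc Real.sqrt (1 - t^2) ≤ Real.sqrt (Real.exp (-(t^2))) := Real.sqrt_le_sqrt h2
              _ = Real.exp (-(t^2)/2) := (Real.exp_half _).symm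
          have h3 : (Real.sqrt (1 - t^2))^m ≤ (Real.exp (-(t^2)/2))^m :=
            pow_le_pow_left₀ (Real.sqrt_nonneg _) h1 m
          have h4 : (Real.exp (-(t^2)/2))^m = Real.exp (-(((m:ℝ)+1) - 1) * t ^ 2 / 2) := by
            rw [← Real.exp_nat_mul]
            congr 1
            ring
          rw [h4] at h3
          nlinarith [Real.exp_pos (-(((m:ℝ)+1) - 1) * t ^ 2 / 2)]
      _ = ENNReal.ofReal (2 * Real.exp (-((((m+1) : ℕ) : ℝ) - 1) * t ^ 2 / 2)) := by
          norm_num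
end
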